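/- In the fair division instance with 3 agents and 4 goods where agent 1 values the goods (1.4, 2.2, 2.2, 2.2) and agents 2 and 3 each value them (5, 1, 1, 1), every EQ1 allocation A satisfies v_1(A_1) < (v_2(A_2) + v_3(A_3))/2. -/
import Mathlib


open Finset

/-- An allocation is a partition of the goods among the agents. -/
def isPartition {ι γ : Type*} [Fintype ι] [Fintype γ] [DecidableEq γ]
    (A : ι → Finset γ) : Prop :=
  (∀ i j, i ≠ j → Disjoint (A i) (A j)) ∧ Finset.univ.biUnion A = Finset.univ

/-- Additive value of a bundle. -/
def bundleVal {γ : Type*} (v : γ → ℚ) (S : Finset γ) : ℚ := ∑ g ∈ S, v g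

/-- EQ1: for every pair of agents `i, j` with `A i` nonempty, some good can be
removed from `A i` so that `i`'s value drops to at most `j`'s value. -/
def EQ1 {ι γ : Type*} [DecidableEq γ] (v : ι → γ → ℚ) (A : ι → Finset γ) : Prop :=
  ∀ i j, A i ≠ ∅ → ∃ g ∈ A i, bundleVal (v i) ((A i).erase g) ≤ bundleVal (v j) (A j)

/-- The instance of Theorem 3.1 (Fig. 1). -/
def vFig1 : Fin 3 → Fin 4 → ℚ :=
  ![![7/5, 11/5, 11/5, 11/5], ![5, 1, 1, 1], ![5, 1, 1, 1]]


def W : Fin 3 → Fin 4 → ℤ := ![![7, 11, 11, 11], ![25, 5, 5, 5], ![25, 5, 5, 5]]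

lemma vW (i : Fin 3) (g : Fin 4) : vFig1 i g = (W i g : ℚ) / 5 := by
  fin_cases i <;> fin_cases g <;> norm_num [vFig1, W]

lemma bundleW (i : Fin 3) (S : Finset (Fin 4)) :
    bundleVal (vFig1 i) S = ((∑ g ∈ S, W i g : ℤ) : ℚ) / 5 := by
  simp only [bundleVal, vW]
  rw [← Finset.sum_div]
  push_cast
  ring

lemma auxZ : ∀ a b c d : Fin 3,
    (∀ i j : Fin 3, univ.filter (fun g => ![a,b,c,d] g = i) ≠ ∅ →
      ∃ g ∈ univ.filter (fun g => ![a,b,c,d] g = i),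
        (∑ x ∈ (univ.filter (fun g => ![a,b,c,d] g = i)).erase g, W i x)
          ≤ ∑ x ∈ univ.filter (fun g => ![a,b,c,d] g = j), W j x) →
    2 * ∑ x ∈ univ.filter (fun g => ![a,b,c,d] g = 0), W 0 x
      < (∑ x ∈ univ.filter (fun g => ![a,b,c,d] g = 1), W 1 x)
        + ∑ x ∈ univ.filter (fun g => ![a,b,c,d] g = 2), W 2 x := by
  decide

/-- in the instance of Fig. 1, every EQ1 allocation `A` satisfies
`v₁(A₁) < (v₂(A₂) + v₃(A₃))/2`. -/
theorem stmt1 (A : Fin 3 → Finset (Fin 4)) (hpart : isPartition A)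
    (heq1 : EQ1 vFig1 A) :
    bundleVal (vFig1 0) (A 0)
      < (bundleVal (vFig1 1) (A 1) + bundleVal (vFig1 2) (A 2)) / 2 := by
  obtain ⟨hdisj, hcov⟩ := hpart
  have hex : ∀ g : Fin 4, ∃ i, g ∈ A i := by
    intro g
    have : g ∈ Finset.univ.biUnion A := by rw [hcov]; exact mem_univ g
    simpa using this
  choose f hf using hex
  have hA : ∀ i, A i = univ.filter (fun g => ![f 0, f 1, f 2, f 3] g = i) := by
    intro i; ext g
    have hfg : ![f 0, f 1, f 2, f 3] g = f g := by fin_cases g <;> rfl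
    simp only [mem_filter, mem_univ, true_and, hfg]
    constructor
    · intro hg
      by_contra hne
      exact (Finset.disjoint_left.mp (hdisj (f g) i hne)) (hf g) hg
    · rintro rfl; exact hf g
  have hZ : ∀ i j : Fin 3, univ.filter (fun g => ![f 0, f 1, f 2, f 3] g = i) ≠ ∅ →
      ∃ g ∈ univ.filter (fun g => ![f 0, f 1, f 2, f 3] g = i),
        (∑ x ∈ (univ.filter (fun g => ![f 0, f 1, f 2, f 3] g = i)).erase g, W i x)
          ≤ ∑ x ∈ univ.filter (fun g => ![f 0, f 1, f 2, f 3] g = j), W j x := by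
    intro i j hne
    obtain ⟨g, hg, hle⟩ := heq1 i j (by rw [hA i]; exact hne)
    rw [hA i] at hg
    refine ⟨g, hg, ?_⟩
    have := hle
    rw [hA i, hA j, bundleW, bundleW] at this
    have h5 : (0:ℚ) < 5 := by norm_num
    exact_mod_cast (div_le_div_iff_of_pos_right h5).mp this
  have key := auxZ (f 0) (f 1) (f 2) (f 3) hZ
  rw [hA 0, hA 1, hA 2, bundleW, bundleW, bundleW]
  have key' : ((2 * ∑ x ∈ univ.filter (fun g => ![f 0, f 1, f 2, f 3] g = 0), W 0 x : ℤ) : ℚ)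
      < (((∑ x ∈ univ.filter (fun g => ![f 0, f 1, f 2, f 3] g = 1), W 1 x)
        + ∑ x ∈ univ.filter (fun g => ![f 0, f 1, f 2, f 3] g = 2), W 2 x : ℤ) : ℚ) := by
    exact_mod_cast key
  push_cast at key' ⊢
  linarith
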